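/- arXiv:1611.08087 — 7 statements merged into one kernel-verified Lean document; each statement's English description precedes it below -/
import Mathlib

section
/- Let (f_n) be an orthonormal sequence in L^2[0,1] and define f : [0,1] → L^2[0,1] by f(t) = Σ_{n≥1} 2^n f_n · χ_{I_n}(t), where I_n = (1/2^n, 1/2^n + 1/4^n). Then for every g ∈ L^2[0,1], the function t ↦ ⟨f(t), g⟩ belongs to L^2[0,1] with (∫_0^1 |⟨f(t), g⟩|^2 dt)^{1/2} ≤ ‖g‖_{L^2}; i.e., f is 2-Dunford integrable. -/
open MeasureTheory
open scoped ENNReal NNReal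

/-- Pettis' example: with `(f_n)` orthonormal in `L²[0,1]` and
`f(t) = 2^n f_n` for `t ∈ I_n = (1/2^n, 1/2^n + 1/4^n)` (`n ≥ 1`), `f(t) = 0` elsewhere,
for every `g ∈ L²[0,1]` the function `t ↦ ⟨f(t), g⟩` belongs to `L²[0,1]` and
`(∫₀¹ |⟨f(t),g⟩|² dt)^{1/2} ≤ ‖g‖`; i.e. `f` is 2-Dunford integrable. -/
theorem stmt6
    (μ : Measure ℝ) (hμ : μ = volume.restrict (Set.Icc (0:ℝ) 1))
    (fseq : ℕ → Lp ℝ 2 μ) (horth : Orthonormal ℝ fseq)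
    (f : ℝ → Lp ℝ 2 μ)
    (hfI : ∀ n : ℕ, ∀ t ∈ Set.Ioo ((1:ℝ)/2^(n+1)) (1/2^(n+1) + 1/4^(n+1)),
      f t = ((2:ℝ)^(n+1)) • fseq n)
    (hf0 : ∀ t : ℝ, (∀ n : ℕ, t ∉ Set.Ioo ((1:ℝ)/2^(n+1)) (1/2^(n+1) + 1/4^(n+1))) → f t = 0) :
    ∀ g : Lp ℝ 2 μ,
      MemLp (fun t => (inner ℝ (f t) g : ℝ)) 2 μ ∧
      (∫ t, |(inner ℝ (f t) g : ℝ)| ^ (2:ℕ) ∂μ) ^ ((1:ℝ)/2) ≤ ‖g‖ := by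
  intro g
  set I : ℕ → Set ℝ := fun n => Set.Ioo ((1:ℝ)/2^(n+1)) (1/2^(n+1) + 1/4^(n+1)) with hIdef
  set a : ℕ → ℝ := fun n => (inner ℝ (fseq n) g : ℝ) with hadef
  set c : ℕ → ℝ := fun n => (2:ℝ)^(n+1) * a n with hcdef
  set h : ℝ → ℝ := fun t => (inner ℝ (f t) g : ℝ) with hhdef
  -- value of h on each interval
  have hval : ∀ n : ℕ, ∀ t ∈ I n, h t = c n := by
    intro n t ht
    simp only [hhdef, hfI n t ht, real_inner_smul_left, hcdef, hadef]
  have hval0 : ∀ t : ℝ, (∀ n : ℕ, t ∉ I n) → h t = 0 := by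
    intro t ht
    simp only [hhdef, hf0 t ht, inner_zero_left]
  -- intervals pairwise disjoint
  have hub : ∀ n : ℕ, (1:ℝ)/2^(n+1) + 1/4^(n+1) ≤ 1/2^n := by
    intro n
    have h1 : (1:ℝ)/4^(n+1) ≤ 1/2^(n+1) := by
      apply one_div_le_one_div_of_le (by positivity)
      exact pow_le_pow_left₀ (by norm_num) (by norm_num) _
    have h2 : (1:ℝ)/2^(n+1) + 1/2^(n+1) = 1/2^n := by
      field_simp; ring
    linarith
  have hdisj : ∀ m n : ℕ, m < n → ∀ t, t ∈ I m → t ∈ I n → False := by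
    intro m n hmn t htm htn
    have h1 : t < (1:ℝ)/2^(n+1) + 1/4^(n+1) := htn.2
    have h2 : (1:ℝ)/2^(m+1) < t := htm.1
    have h3 : (1:ℝ)/2^n ≤ 1/2^(m+1) := by
      apply one_div_le_one_div_of_le (by positivity)
      exact pow_le_pow_right₀ (by norm_num) hmn
    linarith [hub n]
  have hne : ∀ m n : ℕ, m ≠ n → ∀ t, t ∈ I m → t ∈ I n → False := by
    intro m n hmn t htm htn
    rcases lt_or_gt_of_ne hmn with h | h
    · exact hdisj m n h t htm htn
    · exact hdisj n m h t htn htm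
  -- measurability of h
  have hImeas : ∀ n, MeasurableSet (I n) := fun n => measurableSet_Ioo
  have hFmeas : ∀ N : ℕ, Measurable (fun t => ∑ n ∈ Finset.range N, (I n).indicator (fun _ => c n) t) := by
    intro N
    apply Finset.measurable_sum
    intro n _
    exact Measurable.indicator measurable_const (hImeas n)
  have hlim : ∀ t : ℝ, Filter.Tendsto
      (fun N => ∑ n ∈ Finset.range N, (I n).indicator (fun _ => c n) t)
      Filter.atTop (nhds (h t)) := by
    intro t
    have hEv : ∀ᶠ N in Filter.atTop,
        (∑ n ∈ Finset.range N, (I n).indicator (fun _ => c n) t) = h t := by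
      by_cases hex : ∃ n₀, t ∈ I n₀
      · obtain ⟨n₀, hn₀⟩ := hex
        refine Filter.eventually_atTop.mpr ⟨n₀ + 1, fun N hN => ?_⟩
        rw [hval n₀ t hn₀]
        rw [Finset.sum_eq_single_of_mem n₀ (Finset.mem_range.mpr (by omega))]
        · simp [Set.indicator_of_mem hn₀]
        · intro m _ hm
          exact Set.indicator_of_notMem (fun htm => hne m n₀ hm t htm hn₀) _
      · push_neg at hex
        refine Filter.Eventually.of_forall (fun N => ?_)
        rw [hval0 t hex]
        exact Finset.sum_eq_zero (fun m _ => Set.indicator_of_notMem (hex m) _)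
    exact Filter.Tendsto.congr' (hEv.mono fun N hN => hN.symm) tendsto_const_nhds
  have hmeas : Measurable h :=
    measurable_of_tendsto_metrizable hFmeas (tendsto_pi_nhds.mpr hlim)
  -- key pointwise identity in ℝ≥0∞
  have hpt : ∀ t : ℝ, ((‖h t‖₊ : ℝ≥0∞))^2
      = ∑' n, (I n).indicator (fun _ => ((‖c n‖₊ : ℝ≥0∞))^2) t := by
    intro t
    by_cases hex : ∃ n₀, t ∈ I n₀
    · obtain ⟨n₀, hn₀⟩ := hex
      rw [tsum_eq_single n₀]
      · rw [Set.indicator_of_mem hn₀, hval n₀ t hn₀]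
      · intro m hm
        exact Set.indicator_of_notMem (fun htm => hne m n₀ hm t htm hn₀) _
    · push_neg at hex
      rw [hval0 t hex]
      simp [Set.indicator_of_notMem, hex]
  -- measure of the intervals
  have hμI : ∀ n : ℕ, μ (I n) = ENNReal.ofReal ((1:ℝ)/4^(n+1)) := by
    intro n
    have hsub : I n ⊆ Set.Icc (0:ℝ) 1 := by
      intro t ht
      have h1 : (0:ℝ) < 1/2^(n+1) := by positivity
      have h2 : (1:ℝ)/2^(n+1) + 1/4^(n+1) ≤ 1 := by
        have ha2 : (2:ℝ) ≤ 2^(n+1) := le_self_pow₀ (by norm_num) (by omega)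
        have ha4 : (4:ℝ) ≤ 4^(n+1) := le_self_pow₀ (by norm_num) (by omega)
        have hb2 : (1:ℝ)/2^(n+1) ≤ 1/2 := one_div_le_one_div_of_le (by norm_num) ha2
        have hb4 : (1:ℝ)/4^(n+1) ≤ 1/4 := one_div_le_one_div_of_le (by norm_num) ha4
        linarith
      exact ⟨le_of_lt (lt_trans h1 ht.1), le_of_lt (lt_of_lt_of_le ht.2 h2)⟩
    rw [hμ, Measure.restrict_apply (hImeas n), Set.inter_eq_left.mpr hsub,
      hIdef]
    rw [Real.volume_Ioo]
    congr 1
    ring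
  -- the lintegral
  set L : ℝ≥0∞ := ∫⁻ t, ((‖h t‖₊ : ℝ≥0∞))^2 ∂μ with hLdef
  have hsummable : Summable (fun n => a n ^ 2) := by
    have := horth.inner_products_summable (x := g)
    simpa [hadef, Real.norm_eq_abs, sq_abs] using this
  have hL : L = ENNReal.ofReal (∑' n, a n ^ 2) := by
    rw [hLdef]
    have : (fun t => ((‖h t‖₊ : ℝ≥0∞))^2)
        = fun t => ∑' n, (I n).indicator (fun _ => ((‖c n‖₊ : ℝ≥0∞))^2) t := funext hpt
    rw [this, lintegral_tsum (fun n => (Measurable.indicator measurable_const (hImeas n)).aemeasurable)]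
    have hterm : ∀ n : ℕ, (∫⁻ t, (I n).indicator (fun _ => ((‖c n‖₊ : ℝ≥0∞))^2) t ∂μ)
        = ENNReal.ofReal (a n ^ 2) := by
      intro n
      rw [lintegral_indicator_const (hImeas n), hμI n]
      have h1 : ((‖c n‖₊ : ℝ≥0∞))^2 = ENNReal.ofReal (c n ^ 2) := by
        rw [← enorm_eq_nnnorm, ← ofReal_norm_eq_enorm, ← ENNReal.ofReal_pow (norm_nonneg _)]
        congr 1
        rw [Real.norm_eq_abs, sq_abs]
      rw [h1, ← ENNReal.ofReal_mul (by positivity)]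
      congr 1
      have h2 : ((2:ℝ)^(n+1))^2 = 4^(n+1) := by
        rw [← pow_mul, mul_comm, pow_mul]; norm_num
      rw [hcdef]
      have h4 : (4:ℝ)^(n+1) ≠ 0 := by positivity
      field_simp [mul_pow, h2]
      rw [h2]; ring
    rw [tsum_congr hterm, ← ENNReal.ofReal_tsum_of_nonneg (fun n => by positivity) hsummable]
  have hbessel : (∑' n, a n ^ 2) ≤ ‖g‖ ^ 2 := by
    have := horth.tsum_inner_products_le g
    simpa [hadef, Real.norm_eq_abs, sq_abs] using this
  have hLle : L ≤ ENNReal.ofReal (‖g‖ ^ 2) := by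
    rw [hL]; exact ENNReal.ofReal_le_ofReal hbessel
  have hLlt : L < ⊤ := lt_of_le_of_lt hLle ENNReal.ofReal_lt_top
  constructor
  · refine ⟨hmeas.aestronglyMeasurable, ?_⟩
    rw [eLpNorm_eq_lintegral_rpow_enorm_toReal (by norm_num) (by norm_num)]
    simp only [enorm_eq_nnnorm]
    have : ∀ t : ℝ, ((‖h t‖₊ : ℝ≥0∞)) ^ (ENNReal.toReal 2) = ((‖h t‖₊ : ℝ≥0∞))^2 := by
      intro t
      rw [ENNReal.toReal_ofNat]
      rw [show ((2:ℝ)) = ((2:ℕ) : ℝ) by norm_num, ENNReal.rpow_natCast]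
    rw [funext this]
    exact ENNReal.rpow_lt_top_of_nonneg (by positivity) hLlt.ne
  · -- the integral bound
    have hnonneg : 0 ≤ᵐ[μ] (fun t => |h t| ^ (2:ℕ)) := by
      filter_upwards with t using by positivity
    have hInt : (∫ t, |h t| ^ (2:ℕ) ∂μ) = L.toReal := by
      rw [integral_eq_lintegral_of_nonneg_ae hnonneg
        ((hmeas.abs.pow_const 2).aestronglyMeasurable)]
      congr 1
      apply lintegral_congr
      intro t
      rw [← enorm_eq_nnnorm, ← ofReal_norm_eq_enorm, ← ENNReal.ofReal_pow (norm_nonneg _),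
        Real.norm_eq_abs]
    rw [hInt]
    have h1 : L.toReal ≤ ‖g‖ ^ 2 := by
      have := ENNReal.toReal_mono (ENNReal.ofReal_ne_top) hLle
      rwa [ENNReal.toReal_ofReal (by positivity)] at this
    calc L.toReal ^ ((1:ℝ)/2) ≤ (‖g‖ ^ 2) ^ ((1:ℝ)/2) :=
          Real.rpow_le_rpow ENNReal.toReal_nonneg h1 (by norm_num)
      _ = ‖g‖ := by
          rw [← Real.rpow_natCast ‖g‖ 2, ← Real.rpow_mul (norm_nonneg _)]
          norm_num
end

section
/- With f as in Pettis' example (f(t) = Σ_n 2^n f_n χ_{I_n}(t), (f_n) orthonormal in L^2[0,1], I_n = (1/2^n, 1/2^n + 1/4^n)), the operator S : L^2[0,1] → L^2[0,1] given by S(g)(t) = ⟨f(t), g⟩ is not compact. -/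
set_option synthInstance.maxHeartbeats 1000000
set_option maxHeartbeats 1000000


open MeasureTheory

/-- In Pettis' example, the operator `S : L²[0,1] → L²[0,1]`, `S(g)(t) = ⟨f(t), g⟩`,
is not compact. -/
theorem stmt7
    (μ : Measure ℝ) (hμ : μ = volume.restrict (Set.Icc (0:ℝ) 1))
    (fseq : ℕ → Lp ℝ 2 μ) (horth : Orthonormal ℝ fseq)
    (f : ℝ → Lp ℝ 2 μ)
    (hfI : ∀ n : ℕ, ∀ t ∈ Set.Ioo ((1:ℝ)/2^(n+1)) (1/2^(n+1) + 1/4^(n+1)),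
      f t = ((2:ℝ)^(n+1)) • fseq n)
    (hf0 : ∀ t : ℝ, (∀ n : ℕ, t ∉ Set.Ioo ((1:ℝ)/2^(n+1)) (1/2^(n+1) + 1/4^(n+1))) → f t = 0)
    (S : Lp ℝ 2 μ →L[ℝ] Lp ℝ 2 μ)
    (hS : ∀ g : Lp ℝ 2 μ, (S g : ℝ → ℝ) =ᵐ[μ] fun t => (inner ℝ (f t) g : ℝ)) :
    ¬ IsCompactOperator S := by
  classical
  set I : ℕ → Set ℝ := fun n => Set.Ioo ((1:ℝ)/2^(n+1)) (1/2^(n+1) + 1/4^(n+1)) with hI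
  -- pairwise disjointness of the intervals
  have hdisj : ∀ m n : ℕ, m < n → ∀ t, t ∈ I n → t ∉ I m := by
    intro m n hmn t htn htm
    have h1 : (1:ℝ)/4^(n+1) ≤ 1/2^(n+1) := by
      apply one_div_le_one_div_of_le (by positivity)
      exact pow_le_pow_left₀ (by norm_num) (by norm_num) _
    have h2 : (1:ℝ)/2^n ≤ 1/2^(m+1) := by
      apply one_div_le_one_div_of_le (by positivity)
      exact pow_le_pow_right₀ (by norm_num) hmn
    have h3 : (1:ℝ)/2^(n+1) + 1/2^(n+1) = 1/2^n := by
      rw [pow_succ]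
      have : (2:ℝ)^n ≠ 0 := by positivity
      field_simp
      ring
    have ht1 : t < 1/2^(n+1) + 1/4^(n+1) := htn.2
    have ht2 : (1:ℝ)/2^(m+1) < t := htm.1
    linarith
  have hne : ∀ m n : ℕ, m ≠ n → ∀ t, t ∈ I n → t ∉ I m := by
    intro m n hmn t htn htm
    rcases lt_or_gt_of_ne hmn with h | h
    · exact hdisj m n h t htn htm
    · exact hdisj n m h t htm htn
  -- pointwise formula for inner (f t) (fseq n)
  have hpt : ∀ n : ℕ, (fun t => (inner ℝ (f t) (fseq n) : ℝ)) =
      Set.indicator (I n) (fun _ => (2:ℝ)^(n+1)) := by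
    intro n
    funext t
    by_cases hex : ∃ m, t ∈ I m
    · obtain ⟨m, htm⟩ := hex
      rw [hfI m t htm, real_inner_smul_left]
      have := orthonormal_iff_ite.mp horth m n
      by_cases hmn : m = n
      · subst hmn
        simp [this, Set.indicator_of_mem htm, horth.1 m]
      · have : (inner ℝ (fseq m) (fseq n) : ℝ) = 0 := by simp [this, hmn]
        rw [this, mul_zero, Set.indicator_of_notMem]
        intro htn
        exact hne n m (Ne.symm hmn) t htm htn
    · push_neg at hex
      rw [hf0 t hex, inner_zero_left, Set.indicator_of_notMem (hex n)]
  -- measure of I n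
  have hIsub : ∀ n : ℕ, I n ⊆ Set.Icc (0:ℝ) 1 := by
    intro n t ht
    have h1 : (0:ℝ) < 1/2^(n+1) := by positivity
    have h2 : (1:ℝ)/2^(n+1) ≤ 1/2 := by
      apply one_div_le_one_div_of_le (by norm_num)
      calc (2:ℝ) = 2^1 := (pow_one 2).symm
        _ ≤ 2^(n+1) := pow_le_pow_right₀ (by norm_num) (Nat.le_add_left 1 n)
    have h3 : (1:ℝ)/4^(n+1) ≤ 1/4 := by
      apply one_div_le_one_div_of_le (by norm_num)
      calc (4:ℝ) = 4^1 := (pow_one 4).symm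
        _ ≤ 4^(n+1) := pow_le_pow_right₀ (by norm_num) (Nat.le_add_left 1 n)
    exact ⟨le_of_lt (lt_trans h1 ht.1), by linarith [ht.2]⟩
  have hμI : ∀ n : ℕ, (μ (I n)).toReal = 1/4^(n+1) := by
    intro n
    rw [hμ, Measure.restrict_apply measurableSet_Ioo,
      Set.inter_eq_self_of_subset_left (hIsub n)]
    rw [hI]
    simp only [Real.volume_Ioo]
    have h : (1:ℝ)/2^(n+1) + 1/4^(n+1) - 1/2^(n+1) = 1/4^(n+1) := by ring
    rw [h, ENNReal.toReal_ofReal (by positivity)]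
  -- inner products of the images
  have hinner : ∀ m n : ℕ,
      (inner ℝ (S (fseq m)) (S (fseq n)) : ℝ) = if m = n then 1 else 0 := by
    intro m n
    rw [MeasureTheory.L2.inner_def]
    have hcong : ∀ᵐ t ∂μ, (inner ℝ ((S (fseq m) : ℝ → ℝ) t) ((S (fseq n) : ℝ → ℝ) t) : ℝ) =
        Set.indicator (I m) (fun _ => (2:ℝ)^(m+1)) t *
        Set.indicator (I n) (fun _ => (2:ℝ)^(n+1)) t := by
      filter_upwards [hS (fseq m), hS (fseq n)] with t h1 h2
      rw [real_inner_comm]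
      simp only [RCLike.inner_apply, conj_trivial]
      rw [h2, h1, ← congrFun (hpt m) t, ← congrFun (hpt n) t]
    rw [integral_congr_ae hcong]
    by_cases hmn : m = n
    · subst hmn
      have : (fun t => Set.indicator (I m) (fun _ => (2:ℝ)^(m+1)) t *
          Set.indicator (I m) (fun _ => (2:ℝ)^(m+1)) t) =
          Set.indicator (I m) (fun _ => ((2:ℝ)^(m+1))^2) := by
        funext t
        by_cases ht : t ∈ I m <;> simp [Set.indicator_of_mem, Set.indicator_of_notMem, ht, sq]
      rw [this, integral_indicator_const _ measurableSet_Ioo, measureReal_def, hμI m]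
      have h4 : ((2:ℝ)^(m+1))^2 = 4^(m+1) := by
        rw [← pow_mul, mul_comm, pow_mul]; norm_num
      rw [if_pos rfl, smul_eq_mul, h4]
      field_simp
    · have : (fun t => Set.indicator (I m) (fun _ => (2:ℝ)^(m+1)) t *
          Set.indicator (I n) (fun _ => (2:ℝ)^(n+1)) t) = fun _ => (0:ℝ) := by
        funext t
        by_cases ht : t ∈ I n
        · rw [Set.indicator_of_notMem (hne m n hmn t ht), zero_mul]
        · rw [Set.indicator_of_notMem ht, mul_zero]
      rw [this, integral_zero, if_neg hmn]
  have horthS : Orthonormal ℝ (fun n => S (fseq n)) := orthonormal_iff_ite.mpr hinner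
  -- distance between distinct images is at least 1
  have hdist : ∀ m n : ℕ, m ≠ n → (1:ℝ) ≤ dist (S (fseq m)) (S (fseq n)) := by
    intro m n hmn
    rw [dist_eq_norm]
    have hsq : ‖S (fseq m) - S (fseq n)‖^2 = 2 := by
      rw [norm_sub_sq_real, horthS.1 m, horthS.1 n]
      have := hinner m n
      rw [if_neg hmn] at this
      rw [this]; norm_num
    nlinarith [norm_nonneg (S (fseq m) - S (fseq n))]
  -- now derive a contradiction from compactness
  intro hcmp
  obtain ⟨K, hK, hKsub⟩ :=
    hcmp.image_subset_compact_of_isVonNBounded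
      (NormedSpace.isVonNBounded_closedBall ℝ (Lp ℝ 2 μ) 1)
  have hmem : ∀ n : ℕ, S (fseq n) ∈ K := by
    intro n
    apply hKsub
    exact ⟨fseq n, by simp [Metric.mem_closedBall, dist_eq_norm, horth.1 n], rfl⟩
  obtain ⟨x, -, φ, hφ, hlim⟩ := hK.isSeqCompact hmem
  rw [Metric.tendsto_atTop] at hlim
  obtain ⟨N, hN⟩ := hlim (1/2) (by norm_num)
  have h1 := hN N le_rfl
  have h2 := hN (N+1) (Nat.le_succ N)
  simp only [Function.comp_apply] at h1 h2
  have hne' : φ N ≠ φ (N+1) := fun h => (Nat.lt_irrefl _ (h ▸ hφ (Nat.lt_succ_self N)))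
  have := hdist (φ N) (φ (N+1)) hne'
  have htri := dist_triangle (S (fseq (φ N))) x (S (fseq (φ (N+1))))
  rw [dist_comm x] at htri
  linarith
end

section
/- Let f : Ω → X be p-Dunford integrable and suppose the operator S_f^p : X* → L^p(μ), x* ↦ ⟨f, x*⟩, is compact. Then for every sequence (x_n*) in B_{X*} there exist a subsequence (x_{n_k}*) and x* ∈ B_{X*} such that ⟨f, x_{n_k}*⟩ → ⟨f, x*⟩ μ-almost everywhere. -/
open MeasureTheory Filter

set_option maxHeartbeats 1000000
set_option synthInstance.maxHeartbeats 1000000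

/-- If `f` is `p`-Dunford integrable and `S_f^p : X* → L^p(μ)` is compact (i.e. the image of the
dual unit ball is relatively norm compact in `L^p(μ)`), then every sequence in `B_{X*}` admits a
subsequence `(x_{n_k}*)` and `x* ∈ B_{X*}` with `⟨f, x_{n_k}*⟩ → ⟨f, x*⟩` μ-a.e. -/
theorem stmt8 {Ω : Type*} [MeasurableSpace Ω] (μ : Measure Ω) [IsProbabilityMeasure μ]
    {X : Type*} [NormedAddCommGroup X] [NormedSpace ℝ X] [CompleteSpace X]
    (p : ℝ) (hp : 1 ≤ p) (f : Ω → X)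
    [Fact (1 ≤ ENNReal.ofReal p)]
    (hf : ∀ x' : StrongDual ℝ X, MemLp (fun ω => x' (f ω)) (ENNReal.ofReal p) μ)
    (hcpt : IsCompact (closure {g : Lp ℝ (ENNReal.ofReal p) μ |
      ∃ x' : StrongDual ℝ X, ‖x'‖ ≤ 1 ∧ (g : Ω → ℝ) =ᵐ[μ] fun ω => x' (f ω)})) :
    ∀ xs : ℕ → StrongDual ℝ X, (∀ n, ‖xs n‖ ≤ 1) →
      ∃ φ : ℕ → ℕ, StrictMono φ ∧ ∃ x' : StrongDual ℝ X, ‖x'‖ ≤ 1 ∧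
        ∀ᵐ ω ∂μ, Tendsto (fun k => xs (φ k) (f ω)) atTop (nhds (x' (f ω))) := by
  intro xs hxs
  set P := ENNReal.ofReal p with hP
  have hP0 : P ≠ 0 := by
    simp [hP, ENNReal.ofReal_eq_zero]
    linarith
  have hPtop : P ≠ ⊤ := ENNReal.ofReal_ne_top
  -- the sequence in Lp
  set g : ℕ → Lp ℝ P μ := fun n => (hf (xs n)).toLp _ with hg
  have hmem : ∀ n, g n ∈ closure {g : Lp ℝ P μ |
      ∃ x' : StrongDual ℝ X, ‖x'‖ ≤ 1 ∧ (g : Ω → ℝ) =ᵐ[μ] fun ω => x' (f ω)} := by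
    intro n
    exact subset_closure ⟨xs n, hxs n, MemLp.coeFn_toLp (hf (xs n))⟩
  -- extract an Lp-convergent subsequence
  obtain ⟨a, -, φ, hφ, hconv⟩ := hcpt.tendsto_subseq hmem
  -- Lp convergence implies convergence in measure
  have hLp : Tendsto (fun k => eLpNorm (⇑(g (φ k)) - ⇑a) P μ) atTop (nhds 0) := by
    exact (Lp.tendsto_Lp_iff_tendsto_eLpNorm' (fun k => g (φ k)) a).mp hconv
  have hmeas : TendstoInMeasure μ (fun k => ⇑(g (φ k))) atTop ⇑a :=
    tendstoInMeasure_of_tendsto_eLpNorm_of_ne_top hP0 hPtop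
      (fun k => Lp.aestronglyMeasurable _) (Lp.aestronglyMeasurable a) hLp
  -- extract an a.e.-convergent subsequence
  obtain ⟨ψ, hψ, hae⟩ := hmeas.exists_seq_tendsto_ae
  refine ⟨φ ∘ ψ, hφ.comp hψ, ?_⟩
  -- weak-* cluster point of the subsequence
  have hball : IsCompact (WeakDual.toStrongDual ⁻¹' Metric.closedBall (0 : StrongDual ℝ X) 1) :=
    WeakDual.isCompact_closedBall (𝕜 := ℝ) (0 : StrongDual ℝ X) 1
  set y : ℕ → WeakDual ℝ X := fun k => StrongDual.toWeakDual (xs (φ (ψ k))) with hy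
  have hysub : Filter.map y atTop ≤ Filter.principal
      (WeakDual.toStrongDual ⁻¹' Metric.closedBall (0 : StrongDual ℝ X) 1) := by
    rw [Filter.le_principal_iff, Filter.mem_map]
    refine Filter.univ_mem' fun k => ?_
    have hyk : WeakDual.toStrongDual (y k) = xs (φ (ψ k)) := rfl
    simp only [Set.mem_preimage, Metric.mem_closedBall, dist_zero_right, hyk]
    exact hxs _
  obtain ⟨x'', hx''mem, hx''cl⟩ := hball.exists_clusterPt hysub
  refine ⟨WeakDual.toStrongDual x'', ?_, ?_⟩
  · simpa [Metric.mem_closedBall, dist_zero_right] using hx''mem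
  · -- a.e. identification of limits
    have haeq : ∀ᵐ ω ∂μ, ∀ n, (g n : Ω → ℝ) ω = xs n (f ω) := by
      rw [ae_all_iff]
      intro n
      exact MemLp.coeFn_toLp (hf (xs n))
    filter_upwards [hae, haeq] with ω hω hωeq
    have hten : Tendsto (fun k => xs (φ (ψ k)) (f ω)) atTop (nhds (a ω)) := by
      refine hω.congr fun k => ?_
      exact hωeq (φ (ψ k))
    -- the cluster point evaluated at f ω
    have hclval : ClusterPt (x'' (f ω)) (Filter.map (fun k => xs (φ (ψ k)) (f ω)) atTop) := by
      have := hx''cl.map (WeakDual.eval_continuous (f ω)).continuousAt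
        (Filter.tendsto_map (f := fun w : WeakDual ℝ X => w (f ω)))
      rwa [Filter.map_map] at this
    have hle : Filter.map (fun k => xs (φ (ψ k)) (f ω)) atTop ≤ nhds (a ω) := hten
    have : x'' (f ω) = a ω := by
      exact eq_of_nhds_neBot (hclval.mono hle)
    have hxeq : WeakDual.toStrongDual x'' (f ω) = x'' (f ω) := rfl
    rw [hxeq, this]
    exact hten
end

section
/- Let f : Ω → X be p-Dunford integrable and suppose: (a) for every sequence (x_n*) in B_{X*} there is a subsequence (x_{n_k}*) and x* ∈ B_{X*} with ⟨f, x_{n_k}*⟩ → ⟨f, x*⟩ μ-a.e.; (b) the family {|⟨f,x*⟩|^p : x* ∈ B_{X*}} is uniformly integrable in L^1(μ). Then S_f^p : X* → L^p(μ) is compact. -/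
open MeasureTheory Filter
open ENNReal

/-- If `f` is `p`-Dunford integrable, every sequence in `B_{X*}` admits a subsequence with
`⟨f, x_{n_k}*⟩ → ⟨f, x*⟩` μ-a.e. for some `x* ∈ B_{X*}`, and `{|⟨f,x*⟩|^p : x* ∈ B_{X*}}` is
uniformly integrable in `L¹(μ)`, then `S_f^p : X* → L^p(μ)` is compact. -/
theorem stmt10 {Ω : Type*} [MeasurableSpace Ω] (μ : Measure Ω) [IsProbabilityMeasure μ]
    {X : Type*} [NormedAddCommGroup X] [NormedSpace ℝ X] [CompleteSpace X]
    (p : ℝ) (hp : 1 ≤ p) (f : Ω → X) [Fact (1 ≤ ENNReal.ofReal p)]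
    (hf : ∀ x' : StrongDual ℝ X, MemLp (fun ω => x' (f ω)) (ENNReal.ofReal p) μ)
    (ha : ∀ xs : ℕ → StrongDual ℝ X, (∀ n, ‖xs n‖ ≤ 1) →
      ∃ φ : ℕ → ℕ, StrictMono φ ∧ ∃ x' : StrongDual ℝ X, ‖x'‖ ≤ 1 ∧
        ∀ᵐ ω ∂μ, Tendsto (fun k => xs (φ k) (f ω)) atTop (nhds (x' (f ω))))
    (hb : ∀ ε > (0 : ℝ), ∃ δ > (0 : ℝ), ∀ x' : StrongDual ℝ X, ‖x'‖ ≤ 1 →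
      ∀ A : Set Ω, MeasurableSet A → μ A ≤ ENNReal.ofReal δ →
        ∫ ω in A, |x' (f ω)| ^ p ∂μ ≤ ε) :
    IsCompact (closure {g : Lp ℝ (ENNReal.ofReal p) μ |
      ∃ x' : StrongDual ℝ X, ‖x'‖ ≤ 1 ∧ (g : Ω → ℝ) =ᵐ[μ] fun ω => x' (f ω)}) := by
  have hp0 : (0:ℝ) < p := lt_of_lt_of_le one_pos hp
  have hq0 : ENNReal.ofReal p ≠ 0 := by
    simp only [ne_eq, ENNReal.ofReal_eq_zero, not_le]; exact hp0
  have hqt : ENNReal.ofReal p ≠ ∞ := ENNReal.ofReal_ne_top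
  have hqto : (ENNReal.ofReal p).toReal = p := ENNReal.toReal_ofReal hp0.le
  have hq1 : 1 ≤ ENNReal.ofReal p := Fact.out
  set S : Set (Lp ℝ (ENNReal.ofReal p) μ) :=
    {g : Lp ℝ (ENNReal.ofReal p) μ |
      ∃ x' : StrongDual ℝ X, ‖x'‖ ≤ 1 ∧ (g : Ω → ℝ) =ᵐ[μ] fun ω => x' (f ω)} with hS
  -- uniform integrability of the whole family
  have hui : ∀ (ys : ℕ → StrongDual ℝ X), (∀ n, ‖ys n‖ ≤ 1) →
      UnifIntegrable (fun n ω => ys n (f ω)) (ENNReal.ofReal p) μ := by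
    intro ys hys ε hε
    obtain ⟨δ, hδ, hδ'⟩ := hb (ε ^ p) (Real.rpow_pos_of_pos hε p)
    refine ⟨δ, hδ, fun i s hs hμs => ?_⟩
    have hmem : MemLp (s.indicator (fun ω => ys i (f ω))) (ENNReal.ofReal p) μ :=
      (hf (ys i)).indicator hs
    rw [hmem.eLpNorm_eq_integral_rpow_norm hq0 hqt, hqto]
    apply ENNReal.ofReal_le_ofReal
    have hint : ∫ a, ‖s.indicator (fun ω => ys i (f ω)) a‖ ^ p ∂μ
        = ∫ ω in s, |ys i (f ω)| ^ p ∂μ := by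
      rw [← integral_indicator hs]
      congr 1
      funext a
      by_cases has : a ∈ s
      · simp [Set.indicator_of_mem has, Real.norm_eq_abs]
      · simp [Set.indicator_of_notMem has, Real.zero_rpow hp0.ne']
    rw [hint]
    calc (∫ ω in s, |ys i (f ω)| ^ p ∂μ) ^ p⁻¹
        ≤ (ε ^ p) ^ p⁻¹ := by
          apply Real.rpow_le_rpow ?_ (hδ' (ys i) (hys i) s hs hμs) (inv_nonneg.2 hp0.le)
          exact integral_nonneg fun ω => Real.rpow_nonneg (abs_nonneg _) p
      _ = ε := Real.rpow_rpow_inv hε.le hp0.ne'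
  -- sequential compactness of S
  have hseq : IsSeqCompact S := by
    intro g hg
    choose xs hxs1 hxs2 using hg
    obtain ⟨φ, hφ, x', hx'1, hx'2⟩ := ha xs hxs1
    have hVit : Tendsto
        (fun k => eLpNorm ((fun ω => xs (φ k) (f ω)) - fun ω => x' (f ω))
          (ENNReal.ofReal p) μ) atTop (nhds 0) :=
      tendsto_Lp_finite_of_tendsto_ae hq1 hqt
        (fun k => (hf (xs (φ k))).aestronglyMeasurable) (hf x')
        (fun ε hε => (hui (fun k => xs (φ k)) (fun k => hxs1 (φ k))) hε) hx'2
    refine ⟨(hf x').toLp _, ⟨x', hx'1, (hf x').coeFn_toLp⟩, φ, hφ, ?_⟩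
    have hdist : ∀ k, dist (g (φ k)) ((hf x').toLp _)
        = (eLpNorm ((fun ω => xs (φ k) (f ω)) - fun ω => x' (f ω)) (ENNReal.ofReal p) μ).toReal := by
      intro k
      rw [Lp.dist_def]
      congr 1
      apply eLpNorm_congr_ae
      filter_upwards [hxs2 (φ k), (hf x').coeFn_toLp] with ω h1 h2
      simp [h1, h2]
    rw [tendsto_iff_dist_tendsto_zero]
    simp only [Function.comp_def, hdist]
    have := (ENNReal.tendsto_toReal (by simp : (0:ENNReal) ≠ ∞)).comp hVit
    simpa [Function.comp_def] using this
  have hcpt : IsCompact S := hseq.isCompact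
  rwa [hcpt.isClosed.closure_eq]
end

section
/- Let f : Ω → X be a Bochner integrable function (more generally, p-Bochner integrable, i.e. strongly measurable with ‖f(·)‖ ∈ L^p(μ)) and ν_f(A) = ∫_A f dμ its indefinite integral. Then the total p-variation of ν_f, defined as sup over finite measurable partitions P of (Σ_{A∈P} ‖ν_f(A)‖^p / μ(A)^{p−1})^{1/p}, equals (∫_Ω ‖f(·)‖^p dμ)^{1/p}. -/
open MeasureTheory ENNReal
open scoped Classical

/-- A finite partition of `Ω` into measurable sets. -/
def IsMeasPartition {Ω : Type*} [MeasurableSpace Ω] (P : Finset (Set Ω)) : Prop :=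
  (∀ A ∈ P, MeasurableSet A) ∧ (P : Set (Set Ω)).PairwiseDisjoint id ∧
    ⋃₀ (P : Set (Set Ω)) = Set.univ

/-- The total `p`-variation of a vector-valued set function `ν`,
`sup_P (∑_{A∈P} ‖ν(A)‖^p / μ(A)^{p−1})^{1/p}` (convention `0/0^{p-1} = 0`). -/
noncomputable def totalPVariation {Ω : Type*} [MeasurableSpace Ω] (μ : Measure Ω) (p : ℝ)
    {Z : Type*} [NormedAddCommGroup Z] (ν : Set Ω → Z) : ℝ≥0∞ :=
  ⨆ (P : Finset (Set Ω)) (_ : IsMeasPartition P),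
    (∑ A ∈ P, ENNReal.ofReal ‖ν A‖ ^ p / (μ A) ^ (p - 1)) ^ (1 / p)

section Aux

variable {Ω : Type*} [MeasurableSpace Ω] {X : Type*} [NormedAddCommGroup X] [NormedSpace ℝ X]

/-- Per-set Hölder bound. -/
lemma term_le_lintegral (μ : Measure Ω) [IsProbabilityMeasure μ] {p : ℝ} (hp : 1 ≤ p)
    {h : Ω → X} (hm : AEStronglyMeasurable h μ) (A : Set Ω) :
    ENNReal.ofReal ‖∫ ω in A, h ω ∂μ‖ ^ p / μ A ^ (p - 1) ≤
      ∫⁻ ω in A, ENNReal.ofReal ‖h ω‖ ^ p ∂μ := by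
  have hp0 : (0:ℝ) < p := lt_of_lt_of_le one_pos hp
  have hq0 : ENNReal.ofReal p ≠ 0 := by
    simp [ENNReal.ofReal_eq_zero, not_le, hp0]
  have hqt : ENNReal.ofReal p ≠ ∞ := ENNReal.ofReal_ne_top
  refine ENNReal.div_le_of_le_mul ?_
  have h1 : ENNReal.ofReal ‖∫ ω in A, h ω ∂μ‖ ≤
      eLpNorm h (ENNReal.ofReal p) (μ.restrict A) * (μ A) ^ (1 - 1/p) := by
    calc ENNReal.ofReal ‖∫ ω in A, h ω ∂μ‖ ≤ ∫⁻ ω in A, ‖h ω‖₊ ∂μ := by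
          rw [ofReal_norm]
          exact enorm_integral_le_lintegral_enorm _
      _ = eLpNorm h 1 (μ.restrict A) := by rw [eLpNorm_one_eq_lintegral_enorm]; rfl
      _ ≤ eLpNorm h (ENNReal.ofReal p) (μ.restrict A) *
            (μ.restrict A) Set.univ ^ (1/(1:ℝ≥0∞).toReal - 1/(ENNReal.ofReal p).toReal) :=
          eLpNorm_le_eLpNorm_mul_rpow_measure_univ (ENNReal.one_le_ofReal.mpr hp)
            hm.restrict
      _ = eLpNorm h (ENNReal.ofReal p) (μ.restrict A) * (μ A) ^ (1 - 1/p) := by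
          rw [Measure.restrict_apply_univ, ENNReal.toReal_ofReal hp0.le]
          norm_num
  calc ENNReal.ofReal ‖∫ ω in A, h ω ∂μ‖ ^ p
      ≤ (eLpNorm h (ENNReal.ofReal p) (μ.restrict A) * (μ A) ^ (1 - 1/p)) ^ p :=
        ENNReal.rpow_le_rpow h1 hp0.le
    _ = eLpNorm h (ENNReal.ofReal p) (μ.restrict A) ^ p * μ A ^ (p - 1) := by
        rw [ENNReal.mul_rpow_of_nonneg _ _ hp0.le, ← ENNReal.rpow_mul]
        congr 2
        rw [sub_mul, one_mul, one_div, inv_mul_cancel₀ hp0.ne']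
    _ = (∫⁻ ω in A, ENNReal.ofReal ‖h ω‖ ^ p ∂μ) * μ A ^ (p - 1) := by
        congr 1
        rw [eLpNorm_eq_lintegral_rpow_enorm_toReal hq0 hqt, ENNReal.toReal_ofReal hp0.le,
          ← ENNReal.rpow_mul, one_div, inv_mul_cancel₀ hp0.ne', ENNReal.rpow_one]
        simp_rw [← ofReal_norm]

lemma sum_setLIntegral (μ : Measure Ω) {P : Finset (Set Ω)} (hP : IsMeasPartition P)
    (g : Ω → ℝ≥0∞) : ∑ A ∈ P, ∫⁻ ω in A, g ω ∂μ = ∫⁻ ω, g ω ∂μ := by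
  rw [← lintegral_biUnion_finset (t := fun (A : Set Ω) => A) hP.2.1 (fun A hA => hP.1 A hA) g]
  have h : ⋃ A ∈ P, A = Set.univ := by
    rw [← hP.2.2, Set.sUnion_eq_biUnion]
    simp
  rw [h, setLIntegral_univ]

lemma sum_term_le (μ : Measure Ω) [IsProbabilityMeasure μ] {p : ℝ} (hp : 1 ≤ p)
    {h : Ω → X} (hm : AEStronglyMeasurable h μ) {P : Finset (Set Ω)}
    (hP : IsMeasPartition P) :
    ∑ A ∈ P, ENNReal.ofReal ‖∫ ω in A, h ω ∂μ‖ ^ p / μ A ^ (p - 1) ≤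
      ∫⁻ ω, ENNReal.ofReal ‖h ω‖ ^ p ∂μ := by
  calc ∑ A ∈ P, ENNReal.ofReal ‖∫ ω in A, h ω ∂μ‖ ^ p / μ A ^ (p - 1)
      ≤ ∑ A ∈ P, ∫⁻ ω in A, ENNReal.ofReal ‖h ω‖ ^ p ∂μ :=
        Finset.sum_le_sum fun A _ => term_le_lintegral μ hp hm A
    _ = _ := sum_setLIntegral μ hP _

lemma simple_isMeasPartition (g : SimpleFunc Ω X) :
    IsMeasPartition (g.range.image fun y => ⇑g ⁻¹' {y}) := by
  refine ⟨?_, ?_, ?_⟩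
  · intro A hA
    obtain ⟨y, _, rfl⟩ := Finset.mem_image.mp hA
    exact g.measurableSet_fiber y
  · intro s hs t ht hst
    obtain ⟨y, _, rfl⟩ := Finset.mem_image.mp (Finset.mem_coe.mp hs)
    obtain ⟨z, _, rfl⟩ := Finset.mem_image.mp (Finset.mem_coe.mp ht)
    have hyz : y ≠ z := fun h => hst (by rw [h])
    show Disjoint (⇑g ⁻¹' {y}) (⇑g ⁻¹' {z})
    rw [Set.disjoint_left]
    intro ω h1 h2
    exact hyz ((Set.mem_preimage.mp h1).symm.trans (Set.mem_preimage.mp h2))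
  · ext ω
    simp only [Set.mem_sUnion, Set.mem_univ, iff_true]
    exact ⟨⇑g ⁻¹' {g ω},
      Finset.mem_coe.mpr (Finset.mem_image_of_mem _ (g.mem_range_self ω)), rfl⟩

lemma simple_term_eq [CompleteSpace X] (μ : Measure Ω) [IsFiniteMeasure μ] {p : ℝ} (hp : 1 ≤ p)
    (g : SimpleFunc Ω X) {A : Set Ω} (hA : A ∈ g.range.image fun y => ⇑g ⁻¹' {y}) :
    ENNReal.ofReal ‖∫ ω in A, g ω ∂μ‖ ^ p / μ A ^ (p - 1) =
      ∫⁻ ω in A, ENNReal.ofReal ‖g ω‖ ^ p ∂μ := by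
  have hp0 : (0:ℝ) < p := lt_of_lt_of_le one_pos hp
  obtain ⟨y, _, rfl⟩ := Finset.mem_image.mp hA
  set A := ⇑g ⁻¹' {y} with hAdef
  have hAm : MeasurableSet A := g.measurableSet_fiber y
  have hconst : ∫ ω in A, g ω ∂μ = (μ A).toReal • y := by
    rw [setIntegral_congr_fun hAm (fun ω hω => hω), setIntegral_const]
    rfl
  have hR : ∫⁻ ω in A, ENNReal.ofReal ‖g ω‖ ^ p ∂μ = ENNReal.ofReal ‖y‖ ^ p * μ A := by
    rw [setLIntegral_congr_fun hAm (fun ω hω => by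
      rw [show g ω = y from hω]), setLIntegral_const]
  rw [hconst, hR]
  rcases eq_or_ne (μ A) 0 with h0 | h0
  · rw [h0]
    simp [norm_smul, ENNReal.zero_rpow_of_pos hp0, ENNReal.zero_div]
  · have hfin : μ A ≠ ∞ := measure_ne_top μ A
    rw [norm_smul, Real.norm_eq_abs, abs_of_nonneg ENNReal.toReal_nonneg,
      ENNReal.ofReal_mul ENNReal.toReal_nonneg, ENNReal.ofReal_toReal hfin,
      ENNReal.mul_rpow_of_nonneg _ _ hp0.le]
    have hsplit : μ A ^ p = μ A ^ (p - 1) * μ A := by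
      rw [show p = (p - 1) + 1 by ring, ENNReal.rpow_add _ _ h0 hfin, ENNReal.rpow_one]
      ring_nf
    have hne0 : μ A ^ (p - 1) ≠ 0 :=
      (ENNReal.rpow_pos (pos_iff_ne_zero.mpr h0) hfin).ne'
    have hnet : μ A ^ (p - 1) ≠ ∞ :=
      ENNReal.rpow_ne_top_of_nonneg (by linarith) hfin
    rw [hsplit, mul_assoc, mul_comm (μ A) (ENNReal.ofReal ‖y‖ ^ p),
      mul_comm (μ A ^ (p - 1)) _, mul_div_assoc, ENNReal.div_self hne0 hnet, mul_one]

lemma minkowski_partition (μ : Measure Ω) [CompleteSpace X] {p : ℝ} (hp : 1 ≤ p)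
    {f g : Ω → X} (hfi : Integrable f μ) (hgi : Integrable g μ) (P : Finset (Set Ω)) :
    (∑ A ∈ P, ENNReal.ofReal ‖∫ ω in A, g ω ∂μ‖ ^ p / μ A ^ (p - 1)) ^ (1/p) ≤
      (∑ A ∈ P, ENNReal.ofReal ‖∫ ω in A, f ω ∂μ‖ ^ p / μ A ^ (p - 1)) ^ (1/p) +
      (∑ A ∈ P, ENNReal.ofReal ‖∫ ω in A, (g - f) ω ∂μ‖ ^ p / μ A ^ (p - 1)) ^ (1/p) := by
  have hp0 : (0:ℝ) < p := lt_of_lt_of_le one_pos hp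
  have hterm : ∀ (h : Ω → X) (A : Set Ω),
      ENNReal.ofReal ‖∫ ω in A, h ω ∂μ‖ ^ p / μ A ^ (p - 1)
        = (ENNReal.ofReal ‖∫ ω in A, h ω ∂μ‖ / μ A ^ ((p - 1)/p)) ^ p := by
    intro h A
    rw [ENNReal.div_rpow_of_nonneg _ _ hp0.le, ← ENNReal.rpow_mul,
      div_mul_cancel₀ _ hp0.ne']
  simp only [hterm]
  refine le_trans ?_ (ENNReal.Lp_add_le P
    (fun A => ENNReal.ofReal ‖∫ ω in A, f ω ∂μ‖ / μ A ^ ((p - 1)/p))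
    (fun A => ENNReal.ofReal ‖∫ ω in A, (g - f) ω ∂μ‖ / μ A ^ ((p - 1)/p)) hp)
  refine ENNReal.rpow_le_rpow (Finset.sum_le_sum fun A _ => ?_) (by positivity)
  refine ENNReal.rpow_le_rpow ?_ hp0.le
  rw [← ENNReal.add_div]
  refine ENNReal.div_le_div_right ?_ _
  rw [← ENNReal.ofReal_add (norm_nonneg _) (norm_nonneg _)]
  refine ENNReal.ofReal_le_ofReal ?_
  have hsub : ∫ ω in A, (g - f) ω ∂μ = (∫ ω in A, g ω ∂μ) - ∫ ω in A, f ω ∂μ := by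
    simp only [Pi.sub_apply]
    exact integral_sub hgi.integrableOn hfi.integrableOn
  have : ∫ ω in A, g ω ∂μ = (∫ ω in A, f ω ∂μ) + ∫ ω in A, (g - f) ω ∂μ := by
    rw [hsub]; abel
  rw [this]
  exact norm_add_le _ _

end Aux

/-- For a `p`-Bochner integrable `f : Ω → X`, the total `p`-variation of its indefinite
integral `ν_f(A) = ∫_A f dμ` equals `(∫_Ω ‖f(·)‖^p dμ)^{1/p}`. -/
theorem stmt11 {Ω : Type*} [MeasurableSpace Ω] (μ : Measure Ω) [IsProbabilityMeasure μ]
    {X : Type*} [NormedAddCommGroup X] [NormedSpace ℝ X] [CompleteSpace X]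
    (p : ℝ) (hp : 1 ≤ p) (f : Ω → X)
    (hsm : StronglyMeasurable f) (hf : MemLp f (ENNReal.ofReal p) μ) :
    totalPVariation μ p (fun A => ∫ ω in A, f ω ∂μ) =
      (∫⁻ ω, ENNReal.ofReal ‖f ω‖ ^ p ∂μ) ^ (1 / p) := by
  have hp0 : (0:ℝ) < p := lt_of_lt_of_le one_pos hp
  have hq1 : (1:ℝ≥0∞) ≤ ENNReal.ofReal p := ENNReal.one_le_ofReal.mpr hp
  have hq0 : ENNReal.ofReal p ≠ 0 := by simp [ENNReal.ofReal_eq_zero, not_le, hp0]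
  have hqt : ENNReal.ofReal p ≠ ∞ := ENNReal.ofReal_ne_top
  have hnorm : ∀ (h : Ω → X),
      eLpNorm h (ENNReal.ofReal p) μ = (∫⁻ ω, ENNReal.ofReal ‖h ω‖ ^ p ∂μ) ^ (1/p) := by
    intro h
    rw [eLpNorm_eq_lintegral_rpow_enorm_toReal hq0 hqt, ENNReal.toReal_ofReal hp0.le]
    simp_rw [← ofReal_norm]
  refine le_antisymm ?_ ?_
  · refine iSup_le fun P => iSup_le fun hP => ?_
    exact ENNReal.rpow_le_rpow (sum_term_le μ hp hsm.aestronglyMeasurable hP)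
      (by positivity)
  · refine ENNReal.le_of_forall_pos_le_add fun ε hε hT => ?_
    have hε2 : ((ε : ℝ≥0∞)/2) ≠ 0 := by
      simp [ENNReal.div_eq_zero_iff, hε.ne']
    obtain ⟨g, hg, hgmem⟩ := hf.exists_simpleFunc_eLpNorm_sub_lt hqt hε2
    set P : Finset (Set Ω) := g.range.image (fun y => ⇑g ⁻¹' {y}) with hPdef
    have hP : IsMeasPartition P := simple_isMeasPartition g
    have hint_f : Integrable f μ := hf.integrable hq1
    have hint_g : Integrable (⇑g) μ := hgmem.integrable hq1
    have key : ∑ A ∈ P, ENNReal.ofReal ‖∫ ω in A, g ω ∂μ‖ ^ p / μ A ^ (p - 1) =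
        ∫⁻ ω, ENNReal.ofReal ‖g ω‖ ^ p ∂μ := by
      rw [← sum_setLIntegral μ hP (fun ω => ENNReal.ofReal ‖g ω‖ ^ p)]
      exact Finset.sum_congr rfl fun A hA => simple_term_eq μ hp g hA
    have hsub_le : eLpNorm (⇑g - f) (ENNReal.ofReal p) μ ≤ (ε : ℝ≥0∞)/2 := by
      rw [eLpNorm_sub_comm]; exact hg.le
    calc (∫⁻ ω, ENNReal.ofReal ‖f ω‖ ^ p ∂μ) ^ (1/p)
        = eLpNorm f (ENNReal.ofReal p) μ := (hnorm f).symm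
      _ ≤ eLpNorm (f - ⇑g) (ENNReal.ofReal p) μ + eLpNorm (⇑g) (ENNReal.ofReal p) μ := by
          conv_lhs => rw [show f = (f - ⇑g) + ⇑g by ext ω; simp]
          exact eLpNorm_add_le (hf.1.sub hgmem.1) hgmem.1 hq1
      _ ≤ (ε : ℝ≥0∞)/2 + eLpNorm (⇑g) (ENNReal.ofReal p) μ := add_le_add_left hg.le _
      _ = (ε : ℝ≥0∞)/2 +
            (∑ A ∈ P, ENNReal.ofReal ‖∫ ω in A, g ω ∂μ‖ ^ p / μ A ^ (p - 1)) ^ (1/p) := by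
          rw [hnorm, key]
      _ ≤ (ε : ℝ≥0∞)/2 +
            ((∑ A ∈ P, ENNReal.ofReal ‖∫ ω in A, f ω ∂μ‖ ^ p / μ A ^ (p - 1)) ^ (1/p) +
             (∑ A ∈ P, ENNReal.ofReal ‖∫ ω in A, (⇑g - f) ω ∂μ‖ ^ p / μ A ^ (p - 1)) ^ (1/p)) :=
          add_le_add_right (minkowski_partition μ hp hint_f hint_g P) _
      _ ≤ (ε : ℝ≥0∞)/2 +
            (totalPVariation μ p (fun A => ∫ ω in A, f ω ∂μ) + (ε : ℝ≥0∞)/2) := by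
          refine add_le_add_right (add_le_add ?_ ?_) _
          · exact le_iSup₂_of_le P hP le_rfl
          · calc (∑ A ∈ P, ENNReal.ofReal ‖∫ ω in A, (⇑g - f) ω ∂μ‖ ^ p / μ A ^ (p - 1)) ^ (1/p)
                ≤ (∫⁻ ω, ENNReal.ofReal ‖(⇑g - f) ω‖ ^ p ∂μ) ^ (1/p) :=
                  ENNReal.rpow_le_rpow (sum_term_le μ hp (hgmem.1.sub hf.1) hP) (by positivity)
              _ = eLpNorm (⇑g - f) (ENNReal.ofReal p) μ := (hnorm _).symm
              _ ≤ (ε : ℝ≥0∞)/2 := hsub_le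
      _ = totalPVariation μ p (fun A => ∫ ω in A, f ω ∂μ) + ε := by
          rw [← add_assoc, add_comm ((ε : ℝ≥0∞)/2) _, add_assoc, ENNReal.add_halves]
end

section
/- Let f : Ω → X be strongly measurable and p-Dunford integrable, and let ν_f : Σ → X** be the associated Dunford indefinite integral. If ν_f has bounded p-variation, then f is p-Bochner integrable, with ‖f‖_{L^p(μ,X)} = |ν_f|_p(Ω). -/
open MeasureTheory ENNReal

/-- Any single-partition sum is at most the `p`-th power of the total `p`-variation. -/
lemma partition_sum_le_pow {Ω : Type*} [MeasurableSpace Ω] (μ : Measure Ω) (p : ℝ)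
    (hp0 : 0 < p) {Z : Type*} [NormedAddCommGroup Z] (ν : Set Ω → Z)
    (P : Finset (Set Ω)) (hP : IsMeasPartition P) :
    (∑ A ∈ P, ENNReal.ofReal ‖ν A‖ ^ p / (μ A) ^ (p - 1)) ≤ (totalPVariation μ p ν) ^ p := by
  have h1 : (∑ A ∈ P, ENNReal.ofReal ‖ν A‖ ^ p / (μ A) ^ (p - 1)) ^ (1 / p)
      ≤ totalPVariation μ p ν := by
    exact le_iSup₂_of_le P hP le_rfl
  have := ENNReal.rpow_le_rpow h1 hp0.le
  rwa [← ENNReal.rpow_mul, one_div, inv_mul_cancel₀ hp0.ne', ENNReal.rpow_one] at this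

/-- Lower bound: the `p`-th power lintegral of `‖f‖` is at most the `p`-th power of the
total `p`-variation of the Dunford indefinite integral. -/
lemma lintegral_le_pow_totalPVariation {Ω : Type*} [MeasurableSpace Ω] (μ : Measure Ω)
    [IsProbabilityMeasure μ]
    {X : Type*} [NormedAddCommGroup X] [NormedSpace ℝ X] [CompleteSpace X]
    (p : ℝ) (hp : 1 ≤ p) (f : Ω → X) (hsm : StronglyMeasurable f)
    (hf : ∀ x' : StrongDual ℝ X, MemLp (fun ω => x' (f ω)) (ENNReal.ofReal p) μ)
    (ν : Set Ω → StrongDual ℝ (StrongDual ℝ X))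
    (hν : ∀ A : Set Ω, MeasurableSet A → ∀ x' : StrongDual ℝ X,
      ν A x' = ∫ ω in A, x' (f ω) ∂μ) :
    ∫⁻ ω, ENNReal.ofReal ‖f ω‖ ^ p ∂μ ≤ (totalPVariation μ p ν) ^ p := by
  classical
  borelize X
  have hp0 : (0:ℝ) < p := lt_of_lt_of_le one_pos hp
  have hmf : Measurable f := hsm.measurable
  set V := totalPVariation μ p ν with hVdef
  -- integrability of the scalar functions
  have hint : ∀ x' : StrongDual ℝ X, Integrable (fun ω => x' (f ω)) μ := fun x' =>
    (hf x').integrable (ENNReal.one_le_ofReal.2 hp)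
  -- nonempty Ω
  rcases isEmpty_or_nonempty Ω with hΩ | hΩ
  · simp [lintegral_of_isEmpty]
  -- separable range : a dense sequence
  obtain ⟨c, hc_count, hc_sub⟩ := hsm.isSeparable_range
  have hc_ne : c.Nonempty := by
    rcases c.eq_empty_or_nonempty with h | h
    · exfalso
      have := hc_sub (Set.mem_range_self (Classical.arbitrary Ω))
      rw [h] at this; simp at this
    · exact h
  obtain ⟨x, hx⟩ := hc_count.exists_eq_range hc_ne
  have hdense : ∀ ω : Ω, ∀ ε : ℝ, 0 < ε → ∃ k : ℕ, ‖f ω - x k‖ < ε := by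
    intro ω ε hε
    have h1 : f ω ∈ closure (Set.range x) := by
      rw [← hx]; exact hc_sub (Set.mem_range_self ω)
    rw [Metric.mem_closure_iff] at h1
    obtain ⟨b, hb, hdist⟩ := h1 ε hε
    obtain ⟨k, rfl⟩ := hb
    exact ⟨k, by rwa [dist_eq_norm] at hdist⟩
  -- main claim for a fixed ε
  have key : ∀ ε : ℝ, 0 < ε → ∫⁻ ω, ENNReal.ofReal (‖f ω‖ - 2*ε) ^ p ∂μ ≤ V ^ p := by
    intro ε hε
    set B : ℕ → Set Ω := fun k => f ⁻¹' Metric.ball (x k) ε with hBdef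
    set A : ℕ → Set Ω := disjointed B with hAdef
    have hBmeas : ∀ k, MeasurableSet (B k) := fun k => hmf measurableSet_ball
    have hAmeas : ∀ k, MeasurableSet (A k) := MeasurableSet.disjointed hBmeas
    have hAdisj : Pairwise (Function.onFun Disjoint A) := disjoint_disjointed B
    have hAsub : ∀ k, A k ⊆ B k := disjointed_subset B
    have hAunion : (⋃ k, A k) = Set.univ := by
      rw [hAdef, iUnion_disjointed, Set.eq_univ_iff_forall]
      intro ω
      obtain ⟨k, hk⟩ := hdense ω ε hε
      exact Set.mem_iUnion.2 ⟨k, by simpa [hBdef, Metric.mem_ball, dist_eq_norm] using hk⟩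
    -- the function G
    set G : ℕ → ℝ≥0∞ := fun k => ENNReal.ofReal (‖x k‖ - ε) ^ p * μ (A k) with hGdef
    set F : Set Ω → ℝ≥0∞ := fun S => ENNReal.ofReal ‖ν S‖ ^ p / (μ S) ^ (p - 1) with hFdef
    -- pointwise integral bound
    have hIG : ∀ k, ∫⁻ ω in A k, ENNReal.ofReal (‖f ω‖ - 2*ε) ^ p ∂μ ≤ G k := by
      intro k
      have hb : ∀ ω ∈ A k, ENNReal.ofReal (‖f ω‖ - 2*ε) ^ p ≤ ENNReal.ofReal (‖x k‖ - ε) ^ p := by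
        intro ω hω
        have h1 : ‖f ω - x k‖ < ε := by
          have := hAsub k hω
          simpa [hBdef, Metric.mem_ball, dist_eq_norm] using this
        have h2 : ‖f ω‖ - ‖x k‖ ≤ ‖f ω - x k‖ := norm_sub_norm_le _ _
        exact ENNReal.rpow_le_rpow (ENNReal.ofReal_le_ofReal (by linarith)) hp0.le
      calc ∫⁻ ω in A k, ENNReal.ofReal (‖f ω‖ - 2*ε) ^ p ∂μ
          ≤ ∫⁻ _ω in A k, ENNReal.ofReal (‖x k‖ - ε) ^ p ∂μ := setLIntegral_mono measurable_const hb
        _ = G k := setLIntegral_const _ _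
    -- estimate G k ≤ F (A k)
    have hGF : ∀ k, G k ≤ F (A k) := by
      intro k
      rcases eq_or_ne (μ (A k)) 0 with h0 | h0
      · simp [hGdef, h0]
      rcases le_or_gt (‖x k‖) ε with hle | hlt
      · have : ENNReal.ofReal (‖x k‖ - ε) = 0 := ENNReal.ofReal_eq_zero.2 (by linarith)
        simp [hGdef, this, ENNReal.zero_rpow_of_pos hp0]
      -- nontrivial case
      have hxne : x k ≠ 0 := by
        intro h; rw [h, norm_zero] at hlt; linarith
      obtain ⟨x', hx'norm, hx'val⟩ := exists_dual_vector ℝ (x k) (norm_ne_zero_iff.2 hxne)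
      have hx'val' : x' (x k) = ‖x k‖ := by exact_mod_cast hx'val
      have hlow : (‖x k‖ - ε) * (μ (A k)).toReal ≤ ν (A k) x' := by
        rw [hν (A k) (hAmeas k) x']
        have h1 : ∫ _ω in A k, (‖x k‖ - ε) ∂μ = (‖x k‖ - ε) * (μ (A k)).toReal := by
          rw [setIntegral_const]; rw [smul_eq_mul, measureReal_def]; ring
        rw [← h1]
        refine setIntegral_mono_on
          (integrableOn_const (measure_ne_top μ _))
          ((hint x').integrableOn) (hAmeas k) ?_
        intro ω hω
        have h2 : ‖f ω - x k‖ < ε := by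
          have := hAsub k hω
          simpa [hBdef, Metric.mem_ball, dist_eq_norm] using this
        have h3 : |x' (f ω - x k)| ≤ ‖f ω - x k‖ := by
          calc |x' (f ω - x k)| ≤ ‖x'‖ * ‖f ω - x k‖ := x'.le_opNorm _
            _ = ‖f ω - x k‖ := by rw [hx'norm, one_mul]
        have h4 : x' (f ω) = ‖x k‖ + x' (f ω - x k) := by
          rw [map_sub, hx'val']; ring
        have h5 := abs_le.1 h3
        rw [h4]; linarith
      have hnorm : (‖x k‖ - ε) * (μ (A k)).toReal ≤ ‖ν (A k)‖ := by
        refine le_trans hlow (le_trans (le_abs_self _) ?_)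
        calc |ν (A k) x'| ≤ ‖ν (A k)‖ * ‖x'‖ := (ν (A k)).le_opNorm _
          _ = ‖ν (A k)‖ := by rw [hx'norm, mul_one]
      -- pass to ENNReal
      have hofReal : ENNReal.ofReal (‖x k‖ - ε) * μ (A k) ≤ ENNReal.ofReal ‖ν (A k)‖ := by
        have := ENNReal.ofReal_le_ofReal hnorm
        rwa [ENNReal.ofReal_mul (by linarith), ENNReal.ofReal_toReal (measure_ne_top μ _)] at this
      have hpow : (ENNReal.ofReal (‖x k‖ - ε)) ^ p * (μ (A k)) ^ p
          ≤ ENNReal.ofReal ‖ν (A k)‖ ^ p := by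
        rw [← ENNReal.mul_rpow_of_nonneg _ _ hp0.le]
        exact ENNReal.rpow_le_rpow hofReal hp0.le
      -- conclude by dividing
      rw [hFdef]
      rw [ENNReal.le_div_iff_mul_le (Or.inl ?hb0) (Or.inl ?hbt)]
      case hb0 =>
        simp only [ne_eq, ENNReal.rpow_eq_zero_iff, not_or]
        constructor
        · rintro ⟨h, -⟩; exact h0 h
        · rintro ⟨h, -⟩; exact (measure_ne_top μ _) h
      case hbt => exact ENNReal.rpow_ne_top_of_nonneg (by linarith) (measure_ne_top μ _)
      calc G k * μ (A k) ^ (p - 1)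
          = ENNReal.ofReal (‖x k‖ - ε) ^ p * (μ (A k) ^ (1:ℝ) * μ (A k) ^ (p - 1)) := by
            rw [hGdef]; rw [ENNReal.rpow_one]; ring
        _ = ENNReal.ofReal (‖x k‖ - ε) ^ p * μ (A k) ^ p := by
            rw [← ENNReal.rpow_add _ _ h0 (measure_ne_top μ _)]
            norm_num
        _ ≤ ENNReal.ofReal ‖ν (A k)‖ ^ p := hpow
    -- the finite-stage bound
    have main : ∀ K : ℕ, ∑ k ∈ Finset.range K, ∫⁻ ω in A k, ENNReal.ofReal (‖f ω‖ - 2*ε) ^ p ∂μ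
        ≤ V ^ p := by
      intro K
      set E : Set Ω := ⋃ k ∈ Finset.range K, A k with hEdef
      have hEmeas : MeasurableSet E := Finset.measurableSet_biUnion _ (fun k _ => hAmeas k)
      set R : Set Ω := Eᶜ with hRdef
      set P : Finset (Set Ω) := insert R ((Finset.range K).image A) with hPdef
      have hAsubE : ∀ k ∈ Finset.range K, A k ⊆ E := by
        intro k hk
        exact Set.subset_biUnion_of_mem (u := A) hk
      have hPpart : IsMeasPartition P := by
        refine ⟨?_, ?_, ?_⟩
        · intro S hS
          rw [hPdef, Finset.mem_insert] at hS
          rcases hS with rfl | hS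
          · exact hEmeas.compl
          · obtain ⟨k, hk, rfl⟩ := Finset.mem_image.1 hS
            exact hAmeas k
        · intro S hS T hT hST
          simp only [hPdef, Finset.coe_insert, Set.mem_insert_iff, Finset.coe_image,
            Set.mem_image, Finset.mem_coe, Finset.mem_range] at hS hT
          have hdisjRA : ∀ k < K, Disjoint R (A k) := by
            intro k hk
            rw [hRdef]
            exact Set.disjoint_compl_left_iff_subset.2 (hAsubE k (Finset.mem_range.2 hk))
          rcases hS with rfl | ⟨j, hj, rfl⟩ <;> rcases hT with rfl | ⟨k, hk, rfl⟩
          · exact absurd rfl hST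
          · exact hdisjRA k hk
          · exact (hdisjRA j hj).symm
          · have hjk : j ≠ k := by rintro rfl; exact hST rfl
            exact hAdisj hjk
        · rw [hPdef, Finset.coe_insert, Set.sUnion_insert]
          have h1 : ⋃₀ ((Finset.image A (Finset.range K) : Finset (Set Ω)) : Set (Set Ω)) = E := by
            rw [Finset.coe_image, Set.sUnion_image, hEdef]
            simp
          rw [h1, hRdef, Set.compl_union_self]
      -- combinatorial step
      have hsum1 : ∑ k ∈ Finset.range K, G k ≤ ∑ S ∈ P, F S := by
        set S : Finset ℕ := (Finset.range K).filter (fun k => μ (A k) ≠ 0) with hSdef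
        have h1 : ∑ k ∈ S, G k = ∑ k ∈ Finset.range K, G k := by
          refine Finset.sum_filter_of_ne ?_
          intro k _ hGk h0
          exact hGk (by simp [hGdef, h0])
        have hinj : ∀ j ∈ S, ∀ k ∈ S, A j = A k → j = k := by
          intro j hj k hk hjk
          by_contra hne
          have hd : Disjoint (A j) (A k) := hAdisj hne
          rw [hjk, disjoint_self] at hd
          have hj0 : μ (A j) ≠ 0 := (Finset.mem_filter.1 hj).2
          rw [hjk, hd] at hj0
          simp at hj0
        calc ∑ k ∈ Finset.range K, G k = ∑ k ∈ S, G k := h1.symm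
          _ ≤ ∑ k ∈ S, F (A k) := Finset.sum_le_sum (fun k _ => hGF k)
          _ = ∑ T ∈ S.image A, F T := (Finset.sum_image hinj).symm
          _ ≤ ∑ T ∈ P, F T := by
            refine Finset.sum_le_sum_of_subset ?_
            rw [hPdef]
            exact le_trans (Finset.image_subset_image (Finset.filter_subset _ _))
              (Finset.subset_insert _ _)
      calc ∑ k ∈ Finset.range K, ∫⁻ ω in A k, ENNReal.ofReal (‖f ω‖ - 2*ε) ^ p ∂μ
          ≤ ∑ k ∈ Finset.range K, G k := Finset.sum_le_sum (fun k _ => hIG k)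
        _ ≤ ∑ T ∈ P, F T := hsum1
        _ ≤ V ^ p := partition_sum_le_pow μ p hp0 ν P hPpart
    -- pass to the whole space
    calc ∫⁻ ω, ENNReal.ofReal (‖f ω‖ - 2*ε) ^ p ∂μ
        = ∫⁻ ω in ⋃ k, A k, ENNReal.ofReal (‖f ω‖ - 2*ε) ^ p ∂μ := by
          rw [hAunion, Measure.restrict_univ]
      _ = ∑' k, ∫⁻ ω in A k, ENNReal.ofReal (‖f ω‖ - 2*ε) ^ p ∂μ :=
          lintegral_iUnion hAmeas hAdisj _
      _ ≤ V ^ p := by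
          rw [ENNReal.tsum_eq_iSup_sum]
          refine iSup_le fun s => ?_
          obtain ⟨K, hs⟩ := s.exists_nat_subset_range
          exact le_trans (Finset.sum_le_sum_of_subset hs) (main K)
  -- monotone convergence in ε
  set g : ℕ → Ω → ℝ≥0∞ := fun n ω => ENNReal.ofReal (‖f ω‖ - 2*((n:ℝ)+1)⁻¹) ^ p with hgdef
  have hmono : Monotone g := by
    intro n m hnm ω
    refine ENNReal.rpow_le_rpow (ENNReal.ofReal_le_ofReal ?_) hp0.le
    have h1 : ((m:ℝ)+1)⁻¹ ≤ ((n:ℝ)+1)⁻¹ := by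
      apply inv_anti₀
      · positivity
      · exact_mod_cast by omega
    linarith
  have hgmeas : ∀ n, Measurable (g n) := by
    intro n
    exact (ENNReal.continuous_rpow_const.measurable).comp
      ((hmf.norm.sub measurable_const).ennreal_ofReal)
  have hsup : ∀ ω, (⨆ n, g n ω) = ENNReal.ofReal ‖f ω‖ ^ p := by
    intro ω
    refine iSup_eq_of_tendsto (fun n m hnm => hmono hnm ω) ?_
    have h1 : Filter.Tendsto (fun n : ℕ => ‖f ω‖ - 2*((n:ℝ)+1)⁻¹) Filter.atTop (nhds (‖f ω‖)) := by
      have h2 : Filter.Tendsto (fun n : ℕ => ((n:ℝ)+1)⁻¹) Filter.atTop (nhds 0) := by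
        simpa only [one_div] using tendsto_one_div_add_atTop_nhds_zero_nat (𝕜 := ℝ)
      have h3 := (tendsto_const_nhds (x := ‖f ω‖)).sub ((tendsto_const_nhds (x := (2:ℝ))).mul h2)
      simpa using h3
    exact (ENNReal.continuous_rpow_const.tendsto _).comp
      ((ENNReal.continuous_ofReal.tendsto _).comp h1)
  calc ∫⁻ ω, ENNReal.ofReal ‖f ω‖ ^ p ∂μ = ∫⁻ ω, ⨆ n, g n ω ∂μ :=
        lintegral_congr fun ω => (hsup ω).symm
    _ = ⨆ n, ∫⁻ ω, g n ω ∂μ := lintegral_iSup hgmeas hmono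
    _ ≤ V ^ p := iSup_le fun n => key _ (by positivity)

/-- Upper bound: the total `p`-variation is at most the `Lᵖ` norm (`p`-th root form). -/
lemma totalPVariation_le_lintegral {Ω : Type*} [MeasurableSpace Ω] (μ : Measure Ω)
    [IsProbabilityMeasure μ]
    {X : Type*} [NormedAddCommGroup X] [NormedSpace ℝ X] [CompleteSpace X]
    (p : ℝ) (hp : 1 ≤ p) (f : Ω → X) (hsm : StronglyMeasurable f)
    (hfi : Integrable f μ)
    (ν : Set Ω → StrongDual ℝ (StrongDual ℝ X))
    (hν : ∀ A : Set Ω, MeasurableSet A → ∀ x' : StrongDual ℝ X,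
      ν A x' = ∫ ω in A, x' (f ω) ∂μ) :
    totalPVariation μ p ν ≤ (∫⁻ ω, ENNReal.ofReal ‖f ω‖ ^ p ∂μ) ^ (1/p) := by
  classical
  borelize X
  have hp0 : (0:ℝ) < p := lt_of_lt_of_le one_pos hp
  have hmf : Measurable f := hsm.measurable
  have hgmeas : Measurable (fun ω => ENNReal.ofReal ‖f ω‖) := hmf.norm.ennreal_ofReal
  refine iSup₂_le fun P hP => ?_
  refine ENNReal.rpow_le_rpow ?_ (by positivity)
  -- sum over the partition is at most the integral
  have hterm : ∀ A ∈ P, ENNReal.ofReal ‖ν A‖ ^ p / (μ A) ^ (p - 1)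
      ≤ ∫⁻ ω in A, ENNReal.ofReal ‖f ω‖ ^ p ∂μ := by
    intro A hA
    have hAmeas : MeasurableSet A := hP.1 A hA
    rcases eq_or_ne (μ A) 0 with h0 | h0
    · have hν0 : ν A = 0 := by
        refine ContinuousLinearMap.ext fun x' => ?_
        rw [hν A hAmeas x', ContinuousLinearMap.zero_apply]
        rw [Measure.restrict_eq_zero.2 h0, integral_zero_measure]
      rw [hν0]
      exact le_trans (le_of_eq (by rw [ENNReal.div_eq_zero_iff]; left; rw [ENNReal.rpow_eq_zero_iff]; left; exact ⟨ENNReal.ofReal_eq_zero.2 (le_of_eq ContinuousLinearMap.opNorm_zero), hp0⟩)) (by positivity)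
    · -- ‖ν A‖ ≤ ∫_A ‖f‖
      have hnormint : IntegrableOn (fun ω => ‖f ω‖) A μ := hfi.norm.integrableOn
      have hIA : (0:ℝ) ≤ ∫ ω in A, ‖f ω‖ ∂μ :=
        integral_nonneg (fun ω => norm_nonneg _)
      have hνle : ‖ν A‖ ≤ ∫ ω in A, ‖f ω‖ ∂μ := by
        refine ContinuousLinearMap.opNorm_le_bound _ hIA ?_
        intro x'
        rw [hν A hAmeas x']
        calc ‖∫ ω in A, x' (f ω) ∂μ‖ ≤ ∫ ω in A, ‖x' (f ω)‖ ∂μ :=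
              norm_integral_le_integral_norm _
          _ ≤ ∫ ω in A, ‖x'‖ * ‖f ω‖ ∂μ := by
              refine setIntegral_mono_on ?_ ?_ hAmeas ?_
              · exact ((x'.integrable_comp hfi).norm).integrableOn
              · exact (hnormint.const_mul _)
              · intro ω _
                exact x'.le_opNorm _
          _ = ‖x'‖ * ∫ ω in A, ‖f ω‖ ∂μ := integral_const_mul _ _
          _ = (∫ ω in A, ‖f ω‖ ∂μ) * ‖x'‖ := by ring
      have hstep1 : ENNReal.ofReal ‖ν A‖ ≤ ∫⁻ ω in A, ENNReal.ofReal ‖f ω‖ ∂μ := by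
        calc ENNReal.ofReal ‖ν A‖ ≤ ENNReal.ofReal (∫ ω in A, ‖f ω‖ ∂μ) :=
              ENNReal.ofReal_le_ofReal hνle
          _ = ∫⁻ ω in A, ENNReal.ofReal ‖f ω‖ ∂μ :=
              ofReal_integral_eq_lintegral_ofReal hnormint
                (Filter.Eventually.of_forall fun ω => norm_nonneg _)
      -- Hölder on A
      have hholder : (∫⁻ ω in A, ENNReal.ofReal ‖f ω‖ ∂μ) ^ p
          ≤ (∫⁻ ω in A, ENNReal.ofReal ‖f ω‖ ^ p ∂μ) * (μ A) ^ (p - 1) := by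
        rcases hp.eq_or_lt with heq | hlt
        · rw [← heq]
          simp [ENNReal.rpow_one]
        · set q : ℝ := p.conjExponent with hqdef
          have hpq : p.HolderConjugate q := Real.HolderConjugate.conjExponent hlt
          have hhold := ENNReal.lintegral_mul_le_Lp_mul_Lq (μ.restrict A) hpq
            (hgmeas.aemeasurable) (aemeasurable_const (b := (1:ℝ≥0∞)))
          simp only [Pi.mul_apply, mul_one, ENNReal.one_rpow, lintegral_one,
            Measure.restrict_apply_univ] at hhold
          have h2 := ENNReal.rpow_le_rpow hhold hp0.le
          rw [ENNReal.mul_rpow_of_nonneg _ _ hp0.le, ← ENNReal.rpow_mul, ← ENNReal.rpow_mul] at h2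
          have e1 : 1/p * p = 1 := by field_simp
          have e2 : 1/q * p = p - 1 := by
            have h3 : (p - 1) * q = p := hpq.sub_one_mul_conj
            have hq0 : q ≠ 0 := hpq.symm.pos.ne'
            rw [one_div, inv_mul_eq_div, div_eq_iff hq0]
            linarith
          rw [e1, e2, ENNReal.rpow_one] at h2
          exact h2
      -- combine
      rw [ENNReal.div_le_iff ?hb0 ?hbt]
      case hb0 =>
        simp only [ne_eq, ENNReal.rpow_eq_zero_iff, not_or]
        exact ⟨fun ⟨h, _⟩ => h0 h, fun ⟨h, _⟩ => (measure_ne_top μ A) h⟩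
      case hbt => exact ENNReal.rpow_ne_top_of_nonneg (by linarith) (measure_ne_top μ A)
      calc ENNReal.ofReal ‖ν A‖ ^ p ≤ (∫⁻ ω in A, ENNReal.ofReal ‖f ω‖ ∂μ) ^ p :=
            ENNReal.rpow_le_rpow hstep1 hp0.le
        _ ≤ (∫⁻ ω in A, ENNReal.ofReal ‖f ω‖ ^ p ∂μ) * (μ A) ^ (p - 1) := hholder
  calc ∑ A ∈ P, ENNReal.ofReal ‖ν A‖ ^ p / (μ A) ^ (p - 1)
      ≤ ∑ A ∈ P, ∫⁻ ω in A, ENNReal.ofReal ‖f ω‖ ^ p ∂μ := Finset.sum_le_sum hterm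
    _ = ∫⁻ ω in ⋃ A ∈ P, id A, ENNReal.ofReal ‖f ω‖ ^ p ∂μ :=
        (lintegral_biUnion_finset hP.2.1 (fun A hA => hP.1 A hA) _).symm
    _ = ∫⁻ ω, ENNReal.ofReal ‖f ω‖ ^ p ∂μ := by
        have h1 : (⋃ A ∈ P, id A) = Set.univ := by
          rw [← hP.2.2, Set.sUnion_eq_biUnion]
          simp
        rw [h1, Measure.restrict_univ]

/-- If `f : Ω → X` is strongly measurable, `p`-Dunford integrable, and its Dunford indefinite
integral `ν_f : Σ → X**` has bounded `p`-variation, then `f` is `p`-Bochner integrable with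
`‖f‖_{L^p(μ,X)} = |ν_f|_p(Ω)`. -/
theorem stmt12 {Ω : Type*} [MeasurableSpace Ω] (μ : Measure Ω) [IsProbabilityMeasure μ]
    {X : Type*} [NormedAddCommGroup X] [NormedSpace ℝ X] [CompleteSpace X]
    (p : ℝ) (hp : 1 ≤ p) (f : Ω → X) (hsm : StronglyMeasurable f)
    (hf : ∀ x' : StrongDual ℝ X, MemLp (fun ω => x' (f ω)) (ENNReal.ofReal p) μ)
    (ν : Set Ω → StrongDual ℝ (StrongDual ℝ X))
    (hν : ∀ A : Set Ω, MeasurableSet A → ∀ x' : StrongDual ℝ X,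
      ν A x' = ∫ ω in A, x' (f ω) ∂μ)
    (hbv : totalPVariation μ p ν ≠ ⊤) :
    MemLp f (ENNReal.ofReal p) μ ∧
      eLpNorm f (ENNReal.ofReal p) μ = totalPVariation μ p ν := by
  have hp0 : (0:ℝ) < p := lt_of_lt_of_le one_pos hp
  set V := totalPVariation μ p ν with hVdef
  set I := ∫⁻ ω, ENNReal.ofReal ‖f ω‖ ^ p ∂μ with hIdef
  have hIV : I ≤ V ^ p := lintegral_le_pow_totalPVariation μ p hp f hsm hf ν hν
  have heLp : eLpNorm f (ENNReal.ofReal p) μ = I ^ (1/p) := by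
    rw [eLpNorm_eq_lintegral_rpow_enorm_toReal (by simp [ENNReal.ofReal_eq_zero]; linarith)
      ENNReal.ofReal_ne_top]
    rw [ENNReal.toReal_ofReal hp0.le, hIdef]
    congr 1
    refine lintegral_congr fun ω => ?_
    rw [← ofReal_norm_eq_enorm]
  have hVle : eLpNorm f (ENNReal.ofReal p) μ ≤ V := by
    rw [heLp]
    calc I ^ (1/p) ≤ (V ^ p) ^ (1/p) := ENNReal.rpow_le_rpow hIV (by positivity)
      _ = V := by
        rw [← ENNReal.rpow_mul, mul_one_div, div_self hp0.ne', ENNReal.rpow_one]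
  have hmem : MemLp f (ENNReal.ofReal p) μ :=
    ⟨hsm.aestronglyMeasurable, lt_of_le_of_lt hVle (lt_top_iff_ne_top.2 hbv)⟩
  refine ⟨hmem, le_antisymm hVle ?_⟩
  have hfi : Integrable f μ := hmem.integrable (ENNReal.one_le_ofReal.2 hp)
  rw [heLp]
  exact totalPVariation_le_lintegral μ p hp f hsm hfi ν hν
end

section
/- Let u : X → Y be a p-summing operator and ν : Σ → X a finitely additive vector measure vanishing on μ-null sets with bounded p-semivariation. Then u ∘ ν has bounded p-variation and |u ∘ ν|_p(Ω) ≤ π_p(u) · ‖ν‖_p(Ω). -/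
open MeasureTheory ENNReal

/-- Converting a single term of the `p`-variation sum to `ENNReal.ofReal` of a real quantity. -/
lemma ofReal_term {p : ℝ} (hp : 1 ≤ p) (m : ℝ≥0∞) (hm : m ≠ ⊤) (r : ℝ) (hr : 0 ≤ r)
    (h0 : m = 0 → r = 0) :
    ENNReal.ofReal (r ^ p / m.toReal ^ (p - 1)) = ENNReal.ofReal r ^ p / m ^ (p - 1) := by
  have hp0 : 0 < p := lt_of_lt_of_le one_pos hp
  rcases eq_or_ne m 0 with hm0 | hm0
  · rw [hm0, h0 hm0]
    simp [Real.zero_rpow hp0.ne', ENNReal.zero_rpow_of_pos hp0, ENNReal.zero_div]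
  · have ht : 0 < m.toReal := ENNReal.toReal_pos hm0 hm
    have h1 : m ^ (p - 1) = ENNReal.ofReal (m.toReal ^ (p - 1)) := by
      rw [← ENNReal.ofReal_rpow_of_pos ht, ENNReal.ofReal_toReal hm]
    rw [h1, ENNReal.ofReal_rpow_of_nonneg hr hp0.le,
      ← ENNReal.ofReal_div_of_pos (Real.rpow_pos_of_pos ht _)]

/-- If `u : X → Y` is `p`-summing with constant `K` and `ν : Σ → X` is a finitely additive
vector measure vanishing on `μ`-null sets with bounded `p`-semivariation, then `u ∘ ν` has
bounded `p`-variation and `|u ∘ ν|_p(Ω) ≤ π_p(u) ‖ν‖_p(Ω)`. -/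
theorem stmt16 {Ω : Type*} [MeasurableSpace Ω] (μ : Measure Ω) [IsProbabilityMeasure μ]
    {X Y : Type*} [NormedAddCommGroup X] [NormedSpace ℝ X] [CompleteSpace X]
    [NormedAddCommGroup Y] [NormedSpace ℝ Y] [CompleteSpace Y]
    (p : ℝ) (hp : 1 ≤ p) (u : X →L[ℝ] Y) (K : ℝ) (hK : 0 ≤ K)
    (hsum : ∀ (n : ℕ) (x : Fin n → X) (B : ℝ),
      (∀ x' : StrongDual ℝ X, ‖x'‖ ≤ 1 → ∑ i, |x' (x i)| ^ p ≤ B) →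
      ∑ i, ‖u (x i)‖ ^ p ≤ K ^ p * B)
    (ν : Set Ω → X)
    (hadd : ∀ A B : Set Ω, MeasurableSet A → MeasurableSet B → Disjoint A B →
      ν (A ∪ B) = ν A + ν B)
    (hnull : ∀ A : Set Ω, MeasurableSet A → μ A = 0 → ν A = 0)
    (hsv : (⨆ (x' : StrongDual ℝ X) (_ : ‖x'‖ ≤ 1),
      totalPVariation μ p (fun A => x' (ν A))) ≠ ⊤) :
    totalPVariation μ p (fun A => u (ν A)) ≤
      ENNReal.ofReal K * ⨆ (x' : StrongDual ℝ X) (_ : ‖x'‖ ≤ 1),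
        totalPVariation μ p (fun A => x' (ν A)) := by
  have hp0 : 0 < p := lt_of_lt_of_le one_pos hp
  set S := ⨆ (x' : StrongDual ℝ X) (_ : ‖x'‖ ≤ 1),
      totalPVariation μ p (fun A => x' (ν A)) with hSdef
  have hSne : S ≠ ⊤ := hsv
  have hSpne : S ^ p ≠ ⊤ := ENNReal.rpow_ne_top_of_nonneg hp0.le hSne
  have hsR : 0 ≤ S.toReal := ENNReal.toReal_nonneg
  rw [show totalPVariation μ p (fun A => u (ν A)) =
      ⨆ (P : Finset (Set Ω)) (_ : IsMeasPartition P),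
        (∑ A ∈ P, ENNReal.ofReal ‖u (ν A)‖ ^ p / (μ A) ^ (p - 1)) ^ (1 / p) from rfl]
  refine iSup₂_le fun P hP => ?_
  have hmeas : ∀ A ∈ P, MeasurableSet A := hP.1
  -- the scaling coefficients
  set c : Set Ω → ℝ := fun A => (μ A).toReal ^ (-(p - 1) / p) with hc
  have hc0 : ∀ A, 0 ≤ c A := fun A => Real.rpow_nonneg ENNReal.toReal_nonneg _
  have hcp : ∀ A, c A ^ p = ((μ A).toReal ^ (p - 1))⁻¹ := by
    intro A
    rw [hc]
    rw [← Real.rpow_mul ENNReal.toReal_nonneg, div_mul_cancel₀ _ hp0.ne',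
      Real.rpow_neg ENNReal.toReal_nonneg]
  have hkey : ∀ (A : Set Ω) (r : ℝ), 0 ≤ r →
      (c A * r) ^ p = r ^ p / (μ A).toReal ^ (p - 1) := by
    intro A r hr
    rw [Real.mul_rpow (hc0 A) hr, hcp A, div_eq_mul_inv, mul_comm]
  -- index the partition
  set n := P.card with hn
  set e : {A // A ∈ P} ≃ Fin n := P.equivFin with he
  have hsum_eq : ∀ g : Set Ω → ℝ, ∑ i : Fin n, g ((e.symm i : {A // A ∈ P}) : Set Ω)
      = ∑ A ∈ P, g A := by
    intro g
    rw [← Finset.sum_coe_sort P g]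
    exact Equiv.sum_comp e.symm (fun a : {A // A ∈ P} => g a)
  set x : Fin n → X := fun i => c ((e.symm i : {A // A ∈ P}) : Set Ω) •
      ν ((e.symm i : {A // A ∈ P}) : Set Ω) with hx
  -- null sets give ν A = 0
  have hnull' : ∀ A ∈ P, μ A = 0 → ν A = 0 := fun A hA h => hnull A (hmeas A hA) h
  -- bound on the dual sums
  have hB : ∀ x' : StrongDual ℝ X, ‖x'‖ ≤ 1 →
      ∑ i, |x' (x i)| ^ p ≤ S.toReal ^ p := by
    intro x' hx'
    have hterm : ∀ i : Fin n, |x' (x i)| ^ p =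
        (fun A => |x' (ν A)| ^ p / (μ A).toReal ^ (p - 1))
          ((e.symm i : {A // A ∈ P}) : Set Ω) := by
      intro i
      set A := ((e.symm i : {A // A ∈ P}) : Set Ω)
      have : x' (x i) = c A * x' (ν A) := by
        simp [hx, A, _root_.map_smul, smul_eq_mul]
      rw [this, abs_mul, abs_of_nonneg (hc0 A), hkey A _ (abs_nonneg _)]
    rw [Finset.sum_congr rfl (fun i _ => hterm i),
      hsum_eq fun A => |x' (ν A)| ^ p / (μ A).toReal ^ (p - 1)]
    -- now bound the real sum over P by S.toReal ^ p
    set L := ∑ A ∈ P, |x' (ν A)| ^ p / (μ A).toReal ^ (p - 1) with hL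
    have hLnn : ∀ A ∈ P, 0 ≤ |x' (ν A)| ^ p / (μ A).toReal ^ (p - 1) :=
      fun A _ => div_nonneg (Real.rpow_nonneg (abs_nonneg _) _)
        (Real.rpow_nonneg ENNReal.toReal_nonneg _)
    have h1 : ENNReal.ofReal L ≤ S ^ p := by
      rw [hL, ENNReal.ofReal_sum_of_nonneg hLnn]
      have h2 : ∀ A ∈ P, ENNReal.ofReal (|x' (ν A)| ^ p / (μ A).toReal ^ (p - 1)) =
          ENNReal.ofReal ‖x' (ν A)‖ ^ p / (μ A) ^ (p - 1) := by
        intro A hA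
        rw [Real.norm_eq_abs]
        exact ofReal_term hp (μ A) (measure_ne_top μ A) _ (abs_nonneg _)
          (fun h => by rw [hnull' A hA h]; simp)
      rw [Finset.sum_congr rfl h2]
      have h3 : (∑ A ∈ P, ENNReal.ofReal ‖x' (ν A)‖ ^ p / (μ A) ^ (p - 1)) ^ (1 / p)
          ≤ S := by
        refine le_trans ?_ (le_iSup₂ (f := fun (x' : StrongDual ℝ X)
          (_ : ‖x'‖ ≤ 1) => totalPVariation μ p (fun A => x' (ν A))) x' hx')
        exact le_iSup₂ (f := fun (Q : Finset (Set Ω)) (_ : IsMeasPartition Q) =>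
          (∑ A ∈ Q, ENNReal.ofReal ‖x' (ν A)‖ ^ p / (μ A) ^ (p - 1)) ^ (1 / p)) P hP
      calc ∑ A ∈ P, ENNReal.ofReal ‖x' (ν A)‖ ^ p / (μ A) ^ (p - 1)
          = ((∑ A ∈ P, ENNReal.ofReal ‖x' (ν A)‖ ^ p / (μ A) ^ (p - 1)) ^ (1 / p)) ^ p := by
            rw [← ENNReal.rpow_mul, one_div_mul_cancel hp0.ne', ENNReal.rpow_one]
        _ ≤ S ^ p := ENNReal.rpow_le_rpow h3 hp0.le
    have := (ENNReal.ofReal_le_iff_le_toReal hSpne).mp h1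
    rwa [← ENNReal.toReal_rpow] at this
  -- apply the p-summing hypothesis
  have hM := hsum n x (S.toReal ^ p) hB
  have hMterm : ∀ i : Fin n, ‖u (x i)‖ ^ p =
      (fun A => ‖u (ν A)‖ ^ p / (μ A).toReal ^ (p - 1))
        ((e.symm i : {A // A ∈ P}) : Set Ω) := by
    intro i
    set A := ((e.symm i : {A // A ∈ P}) : Set Ω)
    have : u (x i) = c A • u (ν A) := by simp [hx, A, _root_.map_smul]
    rw [this, norm_smul, Real.norm_eq_abs, abs_of_nonneg (hc0 A), hkey A _ (norm_nonneg _)]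
  rw [Finset.sum_congr rfl (fun i _ => hMterm i),
    hsum_eq fun A => ‖u (ν A)‖ ^ p / (μ A).toReal ^ (p - 1)] at hM
  -- convert to ENNReal
  have hMnn : ∀ A ∈ P, 0 ≤ ‖u (ν A)‖ ^ p / (μ A).toReal ^ (p - 1) :=
    fun A _ => div_nonneg (Real.rpow_nonneg (norm_nonneg _) _)
      (Real.rpow_nonneg ENNReal.toReal_nonneg _)
  have hsum_ofReal : ∑ A ∈ P, ENNReal.ofReal ‖u (ν A)‖ ^ p / (μ A) ^ (p - 1)
      ≤ ENNReal.ofReal (K * S.toReal) ^ p := by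
    have h2 : ∀ A ∈ P, ENNReal.ofReal ‖u (ν A)‖ ^ p / (μ A) ^ (p - 1) =
        ENNReal.ofReal (‖u (ν A)‖ ^ p / (μ A).toReal ^ (p - 1)) := by
      intro A hA
      exact (ofReal_term hp (μ A) (measure_ne_top μ A) _ (norm_nonneg _)
        (fun h => by rw [hnull' A hA h]; simp)).symm
    rw [Finset.sum_congr rfl h2, ← ENNReal.ofReal_sum_of_nonneg hMnn,
      ENNReal.ofReal_rpow_of_nonneg (mul_nonneg hK hsR) hp0.le]
    refine ENNReal.ofReal_le_ofReal ?_
    rwa [Real.mul_rpow hK hsR]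
  calc (∑ A ∈ P, ENNReal.ofReal ‖u (ν A)‖ ^ p / (μ A) ^ (p - 1)) ^ (1 / p)
      ≤ (ENNReal.ofReal (K * S.toReal) ^ p) ^ (1 / p) :=
        ENNReal.rpow_le_rpow hsum_ofReal (by positivity)
    _ = ENNReal.ofReal (K * S.toReal) := by
        rw [← ENNReal.rpow_mul, mul_one_div_cancel hp0.ne', ENNReal.rpow_one]
    _ = ENNReal.ofReal K * S := by
        rw [ENNReal.ofReal_mul hK, ENNReal.ofReal_toReal hSne]
end
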